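/- arXiv:2409.07722 — 4 statements merged into one kernel-verified Lean document; each statement's English description precedes it below -/
import Mathlib

section
/- Let K be a compact metric space, and for i = 1,…,r let ψ_i : K → ℝ and g_i : K → ℝ^n be continuous. For p ∈ K set I(p) := {i : ψ_i(p) = 0} and define the set-valued map N(p) := {∑_{i ∈ I(p)} λ_i g_i(p) : λ_i ≥ 0} (with N(p) := {0} when I(p) = ∅). Assume there exists η > 0 such that ‖∑_{i ∈ I(p)} λ_i g_i(p)‖ > 2η whenever I(p) ≠ ∅, λ_i ≥ 0 and ∑_{i ∈ I(p)} λ_i = 1. Then N has closed graph: if p_n → p₀ in K, v_n ∈ N(p_n) and v_n → v₀, then v₀ ∈ N(p₀). -/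
open scoped Classical BigOperators

theorem stmt4 {K : Type*} [MetricSpace K] [CompactSpace K] (n r : ℕ)
    (ψ : Fin r → K → ℝ) (g : Fin r → K → EuclideanSpace ℝ (Fin n))
    (hψ : ∀ i, Continuous (ψ i)) (hg : ∀ i, Continuous (g i))
    (η : ℝ) (hη : 0 < η)
    (hcq : ∀ p : K, (Finset.univ.filter (fun i => ψ i p = 0)).Nonempty →
      ∀ lam : Fin r → ℝ, (∀ i, 0 ≤ lam i) →
        ∑ i ∈ Finset.univ.filter (fun i => ψ i p = 0), lam i = 1 →
          ‖∑ i ∈ Finset.univ.filter (fun i => ψ i p = 0), lam i • g i p‖ > 2 * η)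
    (p : ℕ → K) (p₀ : K) (hp : Filter.Tendsto p Filter.atTop (nhds p₀))
    (v : ℕ → EuclideanSpace ℝ (Fin n)) (v₀ : EuclideanSpace ℝ (Fin n))
    (hv : ∀ k, ∃ lam : Fin r → ℝ, (∀ i, 0 ≤ lam i) ∧
      v k = ∑ i ∈ Finset.univ.filter (fun i => ψ i (p k) = 0), lam i • g i (p k))
    (hvlim : Filter.Tendsto v Filter.atTop (nhds v₀)) :
    ∃ lam : Fin r → ℝ, (∀ i, 0 ≤ lam i) ∧
      v₀ = ∑ i ∈ Finset.univ.filter (fun i => ψ i p₀ = 0), lam i • g i p₀ := by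
  classical
  choose lam0 hlam0 hveq using hv
  set L : ℕ → Fin r → ℝ := fun k i => if ψ i (p k) = 0 then lam0 k i else 0 with hL
  have hLnn : ∀ k i, 0 ≤ L k i := by
    intro k i; simp only [hL]; split_ifs
    · exact hlam0 k i
    · exact le_refl 0
  have hLzero : ∀ k i, ψ i (p k) ≠ 0 → L k i = 0 := by
    intro k i h; simp only [hL, if_neg h]
  have hvL : ∀ k, v k = ∑ i, L k i • g i (p k) := by
    intro k
    rw [hveq k, Finset.sum_filter]
    refine Finset.sum_congr rfl fun i _ => ?_
    simp only [hL]
    split_ifs with h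
    · rfl
    · rw [zero_smul]
  have hLsum_filter : ∀ k, ∑ i ∈ Finset.univ.filter (fun i => ψ i (p k) = 0), L k i
      = ∑ i, L k i := by
    intro k
    rw [Finset.sum_filter]
    refine Finset.sum_congr rfl fun i _ => ?_
    split_ifs with h
    · rfl
    · exact (hLzero k i h).symm
  -- bound on norms of v
  obtain ⟨M, hM⟩ : ∃ M, ∀ k, ‖v k‖ ≤ M := by
    obtain ⟨M, hM⟩ := hvlim.norm.bddAbove_range
    exact ⟨M, fun k => hM ⟨k, rfl⟩⟩
  have hM0 : 0 ≤ M := le_trans (norm_nonneg _) (hM 0)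
  have hsum : ∀ k, ∑ i, L k i ≤ M / (2 * η) := by
    intro k
    by_cases hs : ∑ i, L k i = 0
    · rw [hs]; positivity
    have hspos : 0 < ∑ i, L k i :=
      lt_of_le_of_ne (Finset.sum_nonneg fun i _ => hLnn k i) (Ne.symm hs)
    obtain ⟨i, _, hipos⟩ := Finset.exists_lt_of_sum_lt (f := fun _ : Fin r => (0 : ℝ))
      (g := L k) (by simpa using hspos)
    have hiact : ψ i (p k) = 0 := by
      by_contra h
      rw [hLzero k i h] at hipos; exact lt_irrefl 0 hipos
    have hne : (Finset.univ.filter (fun j => ψ j (p k) = 0)).Nonempty :=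
      ⟨i, Finset.mem_filter.2 ⟨Finset.mem_univ i, hiact⟩⟩
    set S := ∑ i, L k i with hS
    have hkey := hcq (p k) hne (fun j => L k j / S)
      (fun j => div_nonneg (hLnn k j) hspos.le)
      (by
        rw [← Finset.sum_div, hLsum_filter k, div_self hs])
    have heq : ∑ j ∈ Finset.univ.filter (fun j => ψ j (p k) = 0), (L k j / S) • g j (p k)
        = S⁻¹ • v k := by
      rw [hvL k, Finset.smul_sum]
      rw [show (∑ i, S⁻¹ • L k i • g i (p k))
          = ∑ i, if ψ i (p k) = 0 then (L k i / S) • g i (p k) else 0 from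
        Finset.sum_congr rfl fun j _ => by
          split_ifs with h
          · rw [smul_smul, div_eq_inv_mul]
          · rw [hLzero k j h, zero_smul, smul_zero]]
      rw [← Finset.sum_filter]
    rw [heq] at hkey
    rw [norm_smul, norm_inv, Real.norm_eq_abs, abs_of_pos hspos] at hkey
    have h1 : 2 * η * S < ‖v k‖ := by
      have h := hkey
      rw [gt_iff_lt, ← div_eq_inv_mul, lt_div_iff₀ hspos] at h
      linarith
    have h2 : S < ‖v k‖ / (2 * η) := by
      rw [lt_div_iff₀ (by positivity : (0:ℝ) < 2 * η)]
      linarith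
    exact le_trans h2.le (div_le_div_of_nonneg_right (hM k) (by positivity))
  -- compactness
  have hbox : ∀ k, L k ∈ Set.Icc (0 : Fin r → ℝ) (fun _ => M / (2 * η)) := by
    intro k
    constructor
    · intro i; exact hLnn k i
    · intro i
      exact le_trans (Finset.single_le_sum (fun j _ => hLnn k j) (Finset.mem_univ i)) (hsum k)
  obtain ⟨lam, hlammem, φ, hφ, hlamlim⟩ :=
    (isCompact_Icc (a := (0 : Fin r → ℝ)) (b := fun _ => M / (2 * η))).tendsto_subseq hbox
  have hlami : ∀ i, Filter.Tendsto (fun k => L (φ k) i) Filter.atTop (nhds (lam i)) :=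
    fun i => ((continuous_apply i).tendsto lam).comp hlamlim
  have hnn : ∀ i, 0 ≤ lam i := fun i => hlammem.1 i
  have hzero : ∀ i, ψ i p₀ ≠ 0 → lam i = 0 := by
    intro i hi
    have hten : Filter.Tendsto (fun k => ψ i (p k)) Filter.atTop (nhds (ψ i p₀)) :=
      ((hψ i).tendsto p₀).comp hp
    have hev : ∀ᶠ k in Filter.atTop, ψ i (p k) ≠ 0 := hten.eventually_ne hi
    have hev' : ∀ᶠ k in Filter.atTop, L (φ k) i = 0 :=
      (hφ.tendsto_atTop.eventually hev).mono fun k hk => hLzero _ _ hk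
    have : Filter.Tendsto (fun k => L (φ k) i) Filter.atTop (nhds 0) :=
      Filter.Tendsto.congr' (hev'.mono fun k hk => hk.symm) tendsto_const_nhds
    exact tendsto_nhds_unique (hlami i) this
  have hpφ : Filter.Tendsto (fun k => p (φ k)) Filter.atTop (nhds p₀) :=
    hp.comp hφ.tendsto_atTop
  have hF : Filter.Tendsto (fun k => ∑ i, L (φ k) i • g i (p (φ k))) Filter.atTop
      (nhds (∑ i, lam i • g i p₀)) := by
    apply tendsto_finset_sum
    intro i _
    exact (hlami i).smul (((hg i).tendsto p₀).comp hpφ)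
  have hvφ : Filter.Tendsto (fun k => v (φ k)) Filter.atTop (nhds v₀) :=
    hvlim.comp hφ.tendsto_atTop
  have hv₀ : v₀ = ∑ i, lam i • g i p₀ := by
    refine tendsto_nhds_unique hvφ ?_
    refine hF.congr fun k => ?_
    exact (hvL (φ k)).symm
  refine ⟨lam, hnn, ?_⟩
  rw [hv₀, Finset.sum_filter]
  refine Finset.sum_congr rfl fun i _ => ?_
  split_ifs with h
  · rfl
  · rw [hzero i h, zero_smul]
end

section
/- Let v_1, …, v_m ∈ ℝ^n, f ∈ ℝ^n, θ_1, …, θ_m ∈ ℝ, λ_1, …, λ_m ≥ 0 with Λ := ∑_i λ_i > 0, and constants μ > 0, η > 0. Assume: (a) |θ_i + ⟨v_i, f⟩| ≤ μ for all i; (b) θ_i + ⟨v_i, f − ∑_j λ_j v_j⟩ = 0 for all i; (c) ‖∑_i β_i v_i‖ > 2η for every nonnegative family (β_i) with ∑_i β_i = 1. Then Λ ≤ μ / (4η²). -/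
open scoped BigOperators

theorem stmt5 (n m : ℕ) (v : Fin m → EuclideanSpace ℝ (Fin n))
    (f : EuclideanSpace ℝ (Fin n)) (θ lam : Fin m → ℝ)
    (hlam : ∀ i, 0 ≤ lam i) (hΛ : 0 < ∑ i, lam i)
    (μ η : ℝ) (hμ : 0 < μ) (hη : 0 < η)
    (ha : ∀ i, |θ i + (inner ℝ (v i) f : ℝ)| ≤ μ)
    (hb : ∀ i, θ i + (inner ℝ (v i) (f - ∑ j, lam j • v j) : ℝ) = 0)
    (hc : ∀ β : Fin m → ℝ, (∀ i, 0 ≤ β i) → ∑ i, β i = 1 → ‖∑ i, β i • v i‖ > 2 * η) :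
    ∑ i, lam i ≤ μ / (4 * η ^ 2) := by
  set Λ := ∑ i, lam i with hΛdef
  set u : EuclideanSpace ℝ (Fin n) := ∑ j, lam j • v j with hu
  -- |⟨v i, u⟩| ≤ μ
  have key : ∀ i, |(inner ℝ (v i) u : ℝ)| ≤ μ := by
    intro i
    have h1 := hb i
    rw [inner_sub_right] at h1
    have : (inner ℝ (v i) u : ℝ) = θ i + inner ℝ (v i) f := by linarith
    rw [this]
    exact ha i
  -- ‖u‖² ≤ μ Λ
  have hnorm2 : ‖u‖ ^ 2 ≤ μ * Λ := by
    have : (inner ℝ u u : ℝ) = ∑ i, lam i * inner ℝ (v i) u := by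
      rw [hu]
      rw [sum_inner]
      exact Finset.sum_congr rfl fun i _ => by rw [real_inner_smul_left]
    have hle : ∑ i, lam i * (inner ℝ (v i) u : ℝ) ≤ ∑ i, lam i * μ := by
      apply Finset.sum_le_sum
      intro i _
      exact mul_le_mul_of_nonneg_left (le_trans (le_abs_self _) (key i)) (hlam i)
    rw [← real_inner_self_eq_norm_sq]
    calc (inner ℝ u u : ℝ) = ∑ i, lam i * inner ℝ (v i) u := this
      _ ≤ ∑ i, lam i * μ := hle
      _ = μ * Λ := by rw [← Finset.sum_mul]; ring
  -- ‖u‖ > 2ηΛ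
  have hβ : ‖u‖ > 2 * η * Λ := by
    have h := hc (fun i => lam i / Λ) (fun i => div_nonneg (hlam i) hΛ.le)
      (by rw [← Finset.sum_div]; exact div_self hΛ.ne')
    have heq : (∑ i, (lam i / Λ) • v i) = Λ⁻¹ • u := by
      rw [hu, Finset.smul_sum]
      exact Finset.sum_congr rfl fun i _ => by rw [smul_smul]; congr 1; field_simp
    rw [heq, norm_smul, norm_inv, Real.norm_eq_abs, abs_of_pos hΛ] at h
    have := (lt_div_iff₀' hΛ).mp (by rwa [inv_mul_eq_div] at h)
    linarith
  have h4 : 4 * η ^ 2 * Λ ^ 2 < ‖u‖ ^ 2 := by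
    nlinarith [norm_nonneg u, mul_pos hη hΛ]
  rw [le_div_iff₀ (by positivity)]
  nlinarith
end

section
/- Let C ⊆ ℝ^n, ρ > 0, x̄ ∈ C, and c ∈ C with ‖c − x̄‖ = ε for some 0 < ε < ρ. Suppose v ∈ ℝ^n satisfies the prox-normal inequality ⟨v, z − c⟩ ≤ (‖v‖ / (2ρ)) ‖z − c‖² for all z ∈ C, and suppose v = −λ (c − x̄) for some λ ≥ 0. Then λ = 0, i.e. v = 0. -/
theorem stmt7 {n : ℕ} (C : Set (EuclideanSpace ℝ (Fin n))) (ρ ε : ℝ)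
    (hε : 0 < ε) (hερ : ε < ρ)
    (xbar c : EuclideanSpace ℝ (Fin n)) (hxbar : xbar ∈ C) (hc : c ∈ C)
    (hnorm : ‖c - xbar‖ = ε)
    (v : EuclideanSpace ℝ (Fin n)) (lam : ℝ) (hlam : 0 ≤ lam)
    (hprox : ∀ z ∈ C, (inner ℝ v (z - c) : ℝ) ≤ ‖v‖ / (2 * ρ) * ‖z - c‖ ^ 2)
    (hv : v = (-lam) • (c - xbar)) :
    lam = 0 ∧ v = 0 := by
  have hρ : 0 < ρ := hε.trans hερ
  have h1 := hprox xbar hxbar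
  have hrev : ‖xbar - c‖ = ε := by rw [← hnorm, norm_sub_rev]
  have hip : (inner ℝ v (xbar - c) : ℝ) = lam * ε ^ 2 := by
    rw [hv, inner_smul_left]
    have : (inner ℝ (c - xbar) (xbar - c) : ℝ) = - ‖c - xbar‖ ^ 2 := by
      rw [show xbar - c = -(c - xbar) by abel, inner_neg_right, real_inner_self_eq_norm_sq]
    rw [this, hnorm]
    ring_nf
    simp
  have hnv : ‖v‖ = lam * ε := by
    rw [hv, norm_smul, hnorm]
    simp [abs_of_nonneg hlam]
  rw [hip, hnv, hrev] at h1
  have hlam0 : lam = 0 := by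
    by_contra h
    have hl : 0 < lam := lt_of_le_of_ne hlam (Ne.symm h)
    have h2 : lam * ε ^ 2 * (2 * ρ) ≤ lam * ε * ε ^ 2 := by
      have := mul_le_mul_of_nonneg_right h1 (by positivity : (0:ℝ) ≤ 2 * ρ)
      calc lam * ε ^ 2 * (2 * ρ) ≤ lam * ε / (2 * ρ) * ε ^ 2 * (2 * ρ) := this
        _ = lam * ε * ε ^ 2 := by field_simp
    nlinarith [mul_pos hl (pow_pos hε 2)]
  refine ⟨hlam0, ?_⟩
  rw [hv, hlam0]
  simp
end

section
/- Let δ > 0, y₀, d ∈ ℝ^l with ‖d − y₀‖ = δ, let y ∈ ℝ^l satisfy ‖y − y₀‖ ≤ δ and ‖y − d‖ ≤ δ/4, and let 0 < α < δ²/4. Then ‖(y − (2α/δ²)(d − y₀)) − y₀‖² < δ² − 2α; in particular, the translated point y − (2α/δ²)(d − y₀) lies in the open ball of radius √(δ² − 2α) centered at y₀. -/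
open scoped InnerProductSpace

theorem stmt10 {l : ℕ} (δ α : ℝ) (hδ : 0 < δ) (hα : 0 < α) (hα2 : α < δ ^ 2 / 4)
    (y₀ d y : EuclideanSpace ℝ (Fin l))
    (hd : ‖d - y₀‖ = δ) (hy : ‖y - y₀‖ ≤ δ) (hyd : ‖y - d‖ ≤ δ / 4) :
    ‖(y - (2 * α / δ ^ 2) • (d - y₀)) - y₀‖ ^ 2 < δ ^ 2 - 2 * α ∧
    (y - (2 * α / δ ^ 2) • (d - y₀)) ∈ Metric.ball y₀ (Real.sqrt (δ ^ 2 - 2 * α)) := by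
  set c : ℝ := 2 * α / δ ^ 2 with hc
  have hδ2 : (0:ℝ) < δ ^ 2 := by positivity
  have hinner : (3 : ℝ) * δ ^ 2 / 4 ≤ ⟪y - y₀, d - y₀⟫_ℝ := by
    have hsplit : (y - y₀ : EuclideanSpace ℝ (Fin l)) = (y - d) + (d - y₀) := by abel
    rw [hsplit, inner_add_left, real_inner_self_eq_norm_sq, hd]
    have hb : |⟪y - d, d - y₀⟫_ℝ| ≤ δ / 4 * δ := by
      calc |⟪y - d, d - y₀⟫_ℝ| ≤ ‖y - d‖ * ‖d - y₀‖ := abs_real_inner_le_norm _ _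
        _ ≤ δ / 4 * δ := by rw [hd]; exact mul_le_mul_of_nonneg_right hyd hδ.le
    nlinarith [abs_le.mp hb]
  have hrw : (y - c • (d - y₀)) - y₀ = (y - y₀) - c • (d - y₀) := by abel
  have hsq : ‖(y - c • (d - y₀)) - y₀‖ ^ 2 =
      ‖y - y₀‖ ^ 2 - 2 * (c * ⟪y - y₀, d - y₀⟫_ℝ) + c ^ 2 * δ ^ 2 := by
    rw [hrw, @norm_sub_sq_real, real_inner_smul_right, norm_smul, mul_pow, hd]
    ring_nf
    rw [Real.norm_eq_abs, sq_abs]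
  have hcval : c * δ ^ 2 = 2 * α := by rw [hc, div_mul_cancel₀ _ hδ2.ne']
  have key : ‖(y - c • (d - y₀)) - y₀‖ ^ 2 < δ ^ 2 - 2 * α := by
    rw [hsq]
    have hc0 : 0 < c := by positivity
    have hny : ‖y - y₀‖ ^ 2 ≤ δ ^ 2 := by nlinarith [norm_nonneg (y - y₀)]
    nlinarith [mul_le_mul_of_nonneg_left hinner hc0.le]
  refine ⟨key, ?_⟩
  rw [Metric.mem_ball, dist_eq_norm]
  have h2α : 0 < δ ^ 2 - 2 * α := by nlinarith
  have := Real.sqrt_lt_sqrt (by positivity) key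
  rwa [Real.sqrt_sq (norm_nonneg _)] at this
end
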